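/- Let A be a k-pebble transducer with equality tests, and let B be the basic k-pebble transducer constructed from A via the consistency-pair construction. If A is deterministic, then B is deterministic. -/

import Mathlib

/-!
Common framework: pebble transducers with equality tests
(following "Reversible Pebble Transducers").
-/

namespace RevPeb

/-- Atomic tests: `headPeb i` is `(h = p_i)`, `pebPeb i j` is `(p_i = p_j)`
(indices are 0-based, pebble `i+1` of the paper). -/
inductive Atom (k : ℕ) : Type where
  | headPeb : Fin k → Atom k
  | pebPeb : Fin k → Fin k → Atom k

/-- Pebble operations (0-based: `drop i`/`lift i` refer to pebble `i+1` of the paper). -/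
inductive PebOp (k : ℕ) : Type where
  | nop : PebOp k
  | drop : Fin k → PebOp k
  | lift : Fin k → PebOp k

/-- A test is a conjunction of literals: an atom together with a polarity. -/
abbrev Test (k : ℕ) : Type := List (Atom k × Bool)

/-- A transition `(q, a, φ, op, q')`; `letter = none` encodes the endmarker `#`. -/
structure PTrans (Q Sg : Type*) (k : ℕ) where
  src : Q
  letter : Option Sg
  test : Test k
  op : PebOp k
  tgt : Q

/-- A `k`-pebble transducer with equality tests (data part).
`dir q` is the polarity of state `q` (which part of `Q_{+1} ⊎ Q_0 ⊎ Q_{-1}` it lies in). -/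
structure PT (Q Sg Gm : Type*) (k : ℕ) where
  dir : Q → SignType
  qinit : Q
  qfin : Q
  δ : Set (PTrans Q Sg k)
  μ : PTrans Q Sg k → List Gm

variable {Q Sg Gm : Type*} {k : ℕ}

/-- Well-formedness: `q_i, q_f ∈ Q_0`, `q_i ≠ q_f`, no transition leaves `q_f`
nor enters `q_i`, and the transition set is finite. -/
def PT.WF (T : PT Q Sg Gm k) : Prop :=
  T.dir T.qinit = 0 ∧ T.dir T.qfin = 0 ∧ T.qinit ≠ T.qfin ∧
  (∀ t ∈ T.δ, t.src ≠ T.qfin ∧ t.tgt ≠ T.qinit) ∧ T.δ.Finite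

/-- Letter of the circular word `#u` at position `h ∈ {0,…,|u|}`;
`none` is the endmarker `#` (at position 0). -/
def letterAt (u : List Sg) (h : ℕ) : Option Sg :=
  if h = 0 then none else u[h-1]?

/-- Satisfaction of an atomic test by a pebble stack and head position. -/
def atomSat (peb : List ℕ) (h : ℕ) : Atom k → Prop
  | .headPeb i => (i : ℕ) < peb.length ∧ peb.getD i 0 = h
  | .pebPeb i j => (i : ℕ) < peb.length ∧ (j : ℕ) < peb.length ∧ peb.getD i 0 = peb.getD j 0

/-- Satisfaction of a test (conjunction of literals). -/
def testSat (peb : List ℕ) (h : ℕ) (φ : Test k) : Prop :=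
  ∀ l ∈ φ, (atomSat peb h l.1 ↔ l.2 = true)

/-- Executability of a pebble operation: `drop i` (pebble `i+1` of the paper) needs
`|peb| = i`, `lift i` needs `|peb| = i+1` and the top pebble at the head. -/
def opEnabled (peb : List ℕ) (h : ℕ) : PebOp k → Prop
  | .nop => True
  | .drop n => peb.length = (n : ℕ)
  | .lift n => peb.length = (n : ℕ) + 1 ∧ peb.getD (n : ℕ) 0 = h

/-- Effect of a pebble operation on the pebble stack. -/
def opApply (peb : List ℕ) (h : ℕ) : PebOp k → List ℕ
  | .nop => peb
  | .drop _ => peb ++ [h]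
  | .lift _ => peb.dropLast

/-- Head movement on the circular word `#u` (`len = |u|`, positions mod `len+1`). -/
def nextHead (len h : ℕ) : SignType → ℕ
  | .pos => (h + 1) % (len + 1)
  | .zero => h
  | .neg => (h + len) % (len + 1)

/-- A configuration `(q, peb, h)`. -/
structure Config (Q : Type*) where
  q : Q
  peb : List ℕ
  h : ℕ

/-- One step of the transducer on input `u` using transition `t`. -/
def PT.StepT (T : PT Q Sg Gm k) (u : List Sg) (t : PTrans Q Sg k) (C C' : Config Q) : Prop :=
  t ∈ T.δ ∧ C.q = t.src ∧ C.h ≤ u.length ∧ C.peb.length ≤ k ∧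
  letterAt u C.h = t.letter ∧
  testSat C.peb C.h t.test ∧ opEnabled C.peb C.h t.op ∧
  C'.q = t.tgt ∧ C'.peb = opApply C.peb C.h t.op ∧
  C'.h = nextHead u.length C.h (T.dir t.tgt)

/-- Runs, accumulating the produced output word. -/
inductive PT.Run (T : PT Q Sg Gm k) (u : List Sg) :
    Config Q → Config Q → List Gm → Prop where
  | refl (C : Config Q) : PT.Run T u C C []
  | step {C C' C'' : Config Q} (t : PTrans Q Sg k) {v : List Gm} :
      T.StepT u t C C' → PT.Run T u C' C'' v → PT.Run T u C C'' (T.μ t ++ v)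

/-- Semantics: pairs `(u,v)` such that some accepting run on `#u` outputs `v`. -/
def PT.Sem (T : PT Q Sg Gm k) : Set (List Sg × List Gm) :=
  {p | T.Run p.1 ⟨T.qinit, [], 0⟩ ⟨T.qfin, [], 0⟩ p.2}

/-- `t` is enabled at configuration `C` (on input `u`). -/
def PT.Enabled (T : PT Q Sg Gm k) (u : List Sg) (t : PTrans Q Sg k) (C : Config Q) : Prop :=
  ∃ C', T.StepT u t C C'

/-- `t` is reverse-enabled at configuration `C'` (on input `u`). -/
def PT.RevEnabled (T : PT Q Sg Gm k) (u : List Sg) (t : PTrans Q Sg k) (C' : Config Q) : Prop :=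
  ∃ C, T.StepT u t C C'

/-- Determinism: two transitions simultaneously enabled at a common configuration coincide. -/
def PT.Deterministic (T : PT Q Sg Gm k) : Prop :=
  ∀ (u : List Sg) (t₁ t₂ : PTrans Q Sg k) (C : Config Q),
    T.Enabled u t₁ C → T.Enabled u t₂ C → t₁ = t₂

/-- Reverse-determinism. -/
def PT.RevDeterministic (T : PT Q Sg Gm k) : Prop :=
  ∀ (u : List Sg) (t₁ t₂ : PTrans Q Sg k) (C' : Config Q),
    T.RevEnabled u t₁ C' → T.RevEnabled u t₂ C' → t₁ = t₂

/-- Reversible = deterministic and reverse-deterministic. -/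
def PT.Reversible (T : PT Q Sg Gm k) : Prop := T.Deterministic ∧ T.RevDeterministic

/-- A basic pebble transducer uses no pebble-pebble equality atoms. -/
def PT.Basic (T : PT Q Sg Gm k) : Prop :=
  ∀ t ∈ T.δ, ∀ l ∈ t.test, ∀ i j : Fin k, l.1 ≠ Atom.pebPeb i j

/-- `T` computes the partial function `f` (encoded with `Option`): `⟦T⟧` is the graph of `f`. -/
def PT.Computes (T : PT Q Sg Gm k) (f : List Sg → Option (List Gm)) : Prop :=
  ∀ u v, (u, v) ∈ T.Sem ↔ f u = some v

end RevPeb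

namespace RevPeb

/-- `Φ₁(peb)`: the `k×k` boolean matrix with `α i j = 1` iff pebbles `i` and `j` are both
dropped and lie on the same position (0-based indices). -/
def Phi1 (k : ℕ) (peb : List ℕ) (i j : Fin k) : Bool :=
  decide ((i : ℕ) < peb.length ∧ (j : ℕ) < peb.length ∧ peb.getD (i : ℕ) 0 = peb.getD (j : ℕ) 0)

/-- `Φ₂(h, peb)`: the bit vector with `b i = 1` iff pebble `i` is dropped on the head
position `h`. -/
def Phi2 (k : ℕ) (h : ℕ) (peb : List ℕ) (i : Fin k) : Bool :=
  decide ((i : ℕ) < peb.length ∧ peb.getD (i : ℕ) 0 = h)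

/-- Basic consistency of a pair `(α, b)`: invariants I1–I5. -/
def BasicConsistent {k : ℕ} (α : Fin k → Fin k → Bool) (b : Fin k → Bool) : Prop :=
  -- (I1) symmetry and transitivity
  (∀ i j : Fin k, α i j = true → α j i = true) ∧
  (∀ i j m : Fin k, α i j = true → α j m = true → α i m = true) ∧
  -- (I2)
  (∀ i : Fin k, b i = true → α i i = true) ∧
  -- (I3)
  (∀ i j : Fin k, b i = true → b j = true → α i j = true) ∧
  -- (I4)
  (∀ i j : Fin k, α i j = true → α i i = true ∧ α j j = true ∧ b i = b j) ∧
  -- (I5)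
  (∀ i j : Fin k, i < j → α j j = true → α i i = true)

end RevPeb

namespace RevPeb

/-- Diagonal entry of `α` at a (possibly out-of-range) natural index; out-of-range is
`false`. -/
def matDiag {k : ℕ} (α : Fin k → Fin k → Bool) (i : ℕ) : Bool :=
  if h : i < k then α ⟨i, h⟩ ⟨i, h⟩ else false

/-- Satisfaction of an atomic test by an abstract pair `(α, b)`. -/
def atomSatAbs {k : ℕ} (α : Fin k → Fin k → Bool) (b : Fin k → Bool) : Atom k → Prop
  | .headPeb i => b i = true
  | .pebPeb i j => α i j = true

/-- Satisfaction of a test by an abstract pair `(α, b)`. -/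
def testSatAbs {k : ℕ} (α : Fin k → Fin k → Bool) (b : Fin k → Bool) (φ : Test k) : Prop :=
  ∀ l ∈ φ, (atomSatAbs α b l.1 ↔ l.2 = true)

/-- Abstract executability of a pebble operation on `(α, b)` (0-based indices:
`drop n`/`lift n` refer to pebble `n+1` of the paper). -/
def opEnabledAbs {k : ℕ} (α : Fin k → Fin k → Bool) (b : Fin k → Bool) : PebOp k → Prop
  | .nop => True
  | .drop n => α n n = false ∧ ((n : ℕ) = 0 ∨ matDiag α ((n : ℕ) - 1) = true)
  | .lift n => b n = true ∧ matDiag α ((n : ℕ) + 1) = false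

/-- Abstract effect of a pebble operation on the matrix `α` (given the bit vector `b`). -/
def opApplyAbs {k : ℕ} (α : Fin k → Fin k → Bool) (b : Fin k → Bool) :
    PebOp k → (Fin k → Fin k → Bool)
  | .nop => α
  | .drop n => fun i j =>
      if i < n ∧ j < n then α i j
      else if i = n ∧ j = n then true
      else if i < n ∧ j = n then b i
      else if i = n ∧ j < n then b j
      else false
  | .lift n => fun i j => if i < n ∧ j < n then α i j else false

end RevPeb

namespace RevPeb

/-- The full test over the head encoded by a bit vector `b`:
`⋀_{i: b i}(h=p_i) ∧ ⋀_{i: ¬b i}¬(h=p_i)`. -/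
def bitTest {k : ℕ} (b : Fin k → Bool) : Test k :=
  (List.finRange k).map (fun i => (Atom.headPeb i, b i))

/-- The transition of the consistency-pair construction generated by a transition `t`
and a pair `(α, b)`. -/
def cpTrans {Q Sg : Type*} {k : ℕ} (t : PTrans Q Sg k)
    (α : Fin k → Fin k → Bool) (b : Fin k → Bool) :
    PTrans (Q × (Fin k → Fin k → Bool)) Sg k :=
  ⟨(t.src, α), t.letter, bitTest b, t.op, (t.tgt, opApplyAbs α b t.op)⟩

/-- The pair `(α, b)` is admissible for the transition `t`: it is basic-consistent and
abstractly satisfies the test and the operation of `t`. -/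
def cpOK {Q Sg : Type*} {k : ℕ} (t : PTrans Q Sg k)
    (α : Fin k → Fin k → Bool) (b : Fin k → Bool) : Prop :=
  BasicConsistent α b ∧ testSatAbs α b t.test ∧ opEnabledAbs α b t.op

/-- The consistency-pair construction: the basic `k`-pebble transducer `B` built from a
`k`-pebble transducer with equality tests `A`.  States are pairs of a state of `A` and a
`k×k` boolean matrix; for each transition `t` of `A` and each admissible pair `(α,b)`,
`B` has the transition `((t.src,α), a, b, op, (t.tgt, op(α,b)))` with the same output. -/
noncomputable def consistencyPair {Q Sg Gm : Type*} {k : ℕ} (A : PT Q Sg Gm k) :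
    PT (Q × (Fin k → Fin k → Bool)) Sg Gm k where
  dir := fun p => A.dir p.1
  qinit := (A.qinit, fun _ _ => false)
  qfin := (A.qfin, fun _ _ => false)
  δ := {t' | ∃ t ∈ A.δ, ∃ α b, cpOK t α b ∧ t' = cpTrans t α b}
  μ := fun t' => by
    classical
    exact if h : ∃ t, t ∈ A.δ ∧ ∃ α b, cpOK t α b ∧ t' = cpTrans t α b
      then A.μ h.choose else []

end RevPeb


namespace RevPeb

section Realization

variable {k : ℕ}

/-- Number of dropped pebbles encoded by `α`: least index with false diagonal. -/
lemma mOf_exists (α : Fin k → Fin k → Bool) : ∃ j, matDiag α j = false :=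
  ⟨k, by simp [matDiag]⟩

noncomputable def mOf (α : Fin k → Fin k → Bool) : ℕ :=
  Nat.find (mOf_exists α)

lemma mOf_spec (α : Fin k → Fin k → Bool) : matDiag α (mOf α) = false :=
  Nat.find_spec (mOf_exists α)

lemma matDiag_of_lt_mOf {α : Fin k → Fin k → Bool} {i : ℕ} (h : i < mOf α) :
    matDiag α i = true := by
  have := Nat.find_min (mOf_exists α) h
  simpa using this

lemma mOf_le (α : Fin k → Fin k → Bool) : mOf α ≤ k :=
  Nat.find_le (by simp [matDiag])

lemma matDiag_fin (α : Fin k → Fin k → Bool) (i : Fin k) : matDiag α (i : ℕ) = α i i := by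
  simp [matDiag, i.isLt]

lemma lt_mOf_of_diag {α : Fin k → Fin k → Bool} {b : Fin k → Bool}
    (hbc : BasicConsistent α b) {i : Fin k} (hd : α i i = true) : (i : ℕ) < mOf α := by
  by_contra h
  push_neg at h
  have hms := mOf_spec α
  rcases lt_or_eq_of_le h with hlt | heq
  · have hmk : mOf α < k := lt_trans hlt i.isLt
    have : α ⟨mOf α, hmk⟩ ⟨mOf α, hmk⟩ = true :=
      hbc.2.2.2.2.2 ⟨mOf α, hmk⟩ i (by simpa [Fin.lt_def] using hlt) hd
    rw [show matDiag α (mOf α) = α ⟨mOf α, hmk⟩ ⟨mOf α, hmk⟩ by simp [matDiag, hmk]] at hms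
    simp [this] at hms
  · rw [heq, matDiag_fin, hd] at hms; simp at hms

/-- Row predicate on natural indices. -/
def rowAt (α : Fin k → Fin k → Bool) (j i : ℕ) : Bool :=
  if hj : j < k then if hi : i < k then α ⟨j, hj⟩ ⟨i, hi⟩ else false else false

lemma rowAt_eq (α : Fin k → Fin k → Bool) (j i : Fin k) :
    rowAt α (j : ℕ) (i : ℕ) = α j i := by
  simp [rowAt, j.isLt, i.isLt]

instance rowAtExistsDec (α : Fin k → Fin k → Bool) (i : ℕ) :
    Decidable (∃ j, rowAt α j i = true) :=
  decidable_of_iff (∃ j : Fin k, rowAt α (j : ℕ) i = true) (by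
    constructor
    · rintro ⟨j, hj⟩; exact ⟨(j : ℕ), hj⟩
    · rintro ⟨j, hj⟩
      have hjk : j < k := by
        by_contra hjk
        simp [rowAt, hjk] at hj
      exact ⟨⟨j, hjk⟩, hj⟩)

/-- Realized position of pebble `i`. -/
noncomputable def posOf (α : Fin k → Fin k → Bool) (b : Fin k → Bool) (h' i : ℕ) : ℕ :=
  if hi : i < k then
    if b ⟨i, hi⟩ = true then h'
    else if hr : ∃ j, rowAt α j i = true then h' + 1 + Nat.find hr else 0
  else 0

lemma posOf_fin_of_bit {α : Fin k → Fin k → Bool} {b : Fin k → Bool} {i : Fin k}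
    (hb : b i = true) (h' : ℕ) : posOf α b h' (i : ℕ) = h' := by
  simp [posOf, i.isLt, hb]

lemma posOf_fin_of_not_bit {α : Fin k → Fin k → Bool} {b : Fin k → Bool} {i : Fin k}
    (hb : ¬ b i = true) (hd : α i i = true) (h' : ℕ) :
    posOf α b h' (i : ℕ) = h' + 1 +
      Nat.find (show ∃ j, rowAt α j (i : ℕ) = true from ⟨i, by rw [rowAt_eq]; exact hd⟩) := by
  have hr : ∃ j, rowAt α j (i : ℕ) = true := ⟨i, by rw [rowAt_eq]; exact hd⟩
  simp [posOf, i.isLt, hb, dif_pos hr]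

lemma posOf_eq_head_iff {α : Fin k → Fin k → Bool} {b : Fin k → Bool} {i : Fin k}
    (hd : α i i = true) (h' : ℕ) : posOf α b h' (i : ℕ) = h' ↔ b i = true := by
  by_cases hb : b i = true
  · simp [posOf_fin_of_bit hb, hb]
  · rw [posOf_fin_of_not_bit hb hd]
    simp [hb]
    omega

lemma posOf_eq_posOf_iff {α : Fin k → Fin k → Bool} {b : Fin k → Bool}
    (hbc : BasicConsistent α b) {i j : Fin k}
    (hdi : α i i = true) (hdj : α j j = true) (h' : ℕ) :
    posOf α b h' (i : ℕ) = posOf α b h' (j : ℕ) ↔ α i j = true := by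
  obtain ⟨hsym, htrans, hI2, hI3, hI4, hI5⟩ := hbc
  have hri : ∃ m, rowAt α m (i : ℕ) = true := ⟨i, by rw [rowAt_eq]; exact hdi⟩
  have hrj : ∃ m, rowAt α m (j : ℕ) = true := ⟨j, by rw [rowAt_eq]; exact hdj⟩
  have findspec : ∀ (x : Fin k) (hx : ∃ m, rowAt α m (x : ℕ) = true),
      ∃ hk : Nat.find hx < k, α ⟨Nat.find hx, hk⟩ x = true := by
    intro x hx
    have hs := Nat.find_spec hx
    rw [rowAt] at hs
    by_cases h1 : Nat.find hx < k
    · rw [dif_pos h1, dif_pos x.isLt] at hs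
      exact ⟨h1, hs⟩
    · rw [dif_neg h1] at hs; simp at hs
  constructor
  · intro hpos
    by_cases hbi : b i = true <;> by_cases hbj : b j = true
    · exact hI3 i j hbi hbj
    · exfalso
      rw [posOf_fin_of_bit hbi, posOf_fin_of_not_bit hbj hdj] at hpos
      omega
    · exfalso
      rw [posOf_fin_of_bit hbj, posOf_fin_of_not_bit hbi hdi] at hpos
      omega
    · rw [posOf_fin_of_not_bit hbi hdi, posOf_fin_of_not_bit hbj hdj] at hpos
      have hfind : Nat.find hri = Nat.find hrj := by omega
      obtain ⟨hki, hαi⟩ := findspec i hri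
      obtain ⟨hkj, hαj⟩ := findspec j hrj
      have : (⟨Nat.find hri, hki⟩ : Fin k) = ⟨Nat.find hrj, hkj⟩ := by
        simp [hfind]
      rw [this] at hαi
      exact htrans i ⟨Nat.find hrj, hkj⟩ j (hsym _ _ hαi) hαj
  · intro hα
    have hbij : b i = b j := (hI4 i j hα).2.2
    by_cases hbi : b i = true
    · rw [posOf_fin_of_bit hbi, posOf_fin_of_bit (hbij ▸ hbi)]
    · have hbj : ¬ b j = true := by rw [← hbij]; exact hbi
      rw [posOf_fin_of_not_bit hbi hdi, posOf_fin_of_not_bit hbj hdj]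
      have hfind : Nat.find hri = Nat.find hrj := by
        apply le_antisymm
        · obtain ⟨hkj, hαj⟩ := findspec j hrj
          apply Nat.find_le
          rw [show Nat.find hrj = ((⟨Nat.find hrj, hkj⟩ : Fin k) : ℕ) from rfl, rowAt_eq]
          exact htrans _ j i hαj (hsym _ _ hα)
        · obtain ⟨hki, hαi⟩ := findspec i hri
          apply Nat.find_le
          rw [show Nat.find hri = ((⟨Nat.find hri, hki⟩ : Fin k) : ℕ) from rfl, rowAt_eq]
          exact htrans _ i j hαi hα
      omega

/-- The realized pebble stack. -/
noncomputable def pebOf (α : Fin k → Fin k → Bool) (b : Fin k → Bool) (h' : ℕ) : List ℕ :=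
  (List.range (mOf α)).map (posOf α b h')

lemma pebOf_length (α : Fin k → Fin k → Bool) (b : Fin k → Bool) (h' : ℕ) :
    (pebOf α b h').length = mOf α := by simp [pebOf]

lemma pebOf_getD {α : Fin k → Fin k → Bool} {b : Fin k → Bool} {h' i : ℕ}
    (hi : i < mOf α) : (pebOf α b h').getD i 0 = posOf α b h' i := by
  rw [pebOf, List.getD_eq_getElem?_getD, List.getElem?_map, List.getElem?_range hi]
  rfl

lemma atomSat_realize {α : Fin k → Fin k → Bool} {b : Fin k → Bool}
    (hbc : BasicConsistent α b) (h' : ℕ) (a : Atom k) :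
    atomSat (pebOf α b h') h' a ↔ atomSatAbs α b a := by
  cases a with
  | headPeb i =>
    simp only [atomSat, atomSatAbs, pebOf_length]
    constructor
    · rintro ⟨him, hpos⟩
      rw [pebOf_getD him] at hpos
      have hd : α i i = true := by
        have := matDiag_of_lt_mOf him; rwa [matDiag_fin] at this
      exact (posOf_eq_head_iff hd h').mp hpos
    · intro hb
      have hd : α i i = true := hbc.2.2.1 i hb
      have him : (i : ℕ) < mOf α := lt_mOf_of_diag hbc hd
      exact ⟨him, by rw [pebOf_getD him]; exact (posOf_eq_head_iff hd h').mpr hb⟩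
  | pebPeb i j =>
    simp only [atomSat, atomSatAbs, pebOf_length]
    constructor
    · rintro ⟨him, hjm, hpos⟩
      rw [pebOf_getD him, pebOf_getD hjm] at hpos
      have hdi : α i i = true := by
        have := matDiag_of_lt_mOf him; rwa [matDiag_fin] at this
      have hdj : α j j = true := by
        have := matDiag_of_lt_mOf hjm; rwa [matDiag_fin] at this
      exact (posOf_eq_posOf_iff hbc hdi hdj h').mp hpos
    · intro hα
      have hdi : α i i = true := (hbc.2.2.2.2.1 i j hα).1
      have hdj : α j j = true := (hbc.2.2.2.2.1 i j hα).2.1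
      have him : (i : ℕ) < mOf α := lt_mOf_of_diag hbc hdi
      have hjm : (j : ℕ) < mOf α := lt_mOf_of_diag hbc hdj
      refine ⟨him, hjm, ?_⟩
      rw [pebOf_getD him, pebOf_getD hjm]
      exact (posOf_eq_posOf_iff hbc hdi hdj h').mpr hα

lemma opEnabled_realize {α : Fin k → Fin k → Bool} {b : Fin k → Bool}
    (hbc : BasicConsistent α b) (h' : ℕ) {op : PebOp k}
    (habs : opEnabledAbs α b op) : opEnabled (pebOf α b h') h' op := by
  cases op with
  | nop => trivial
  | drop n =>
    obtain ⟨h1, h2⟩ := habs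
    simp only [opEnabled, pebOf_length]
    have hub : mOf α ≤ (n : ℕ) := by
      by_contra h
      push_neg at h
      have := matDiag_of_lt_mOf h
      rw [matDiag_fin, h1] at this
      simp at this
    have hlb : (n : ℕ) ≤ mOf α := by
      rcases h2 with h2 | h2
      · omega
      · have hn : (n : ℕ) - 1 < k := lt_of_le_of_lt (Nat.sub_le _ _) n.isLt
        have : α ⟨(n : ℕ) - 1, hn⟩ ⟨(n : ℕ) - 1, hn⟩ = true := by
          rw [matDiag] at h2
          rw [dif_pos hn] at h2
          exact h2
        have := lt_mOf_of_diag hbc this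
        simp at this
        by_cases hn0 : (n : ℕ) = 0
        · omega
        · omega
    omega
  | lift n =>
    obtain ⟨h1, h2⟩ := habs
    have hd : α n n = true := hbc.2.2.1 n h1
    have hnm : (n : ℕ) < mOf α := lt_mOf_of_diag hbc hd
    have hub : mOf α ≤ (n : ℕ) + 1 := by
      by_contra h
      push_neg at h
      have := matDiag_of_lt_mOf h
      rw [this] at h2
      simp at h2
    refine ⟨?_, ?_⟩
    · rw [pebOf_length]; omega
    · rw [pebOf_getD hnm]
      exact posOf_fin_of_bit h1 h'

lemma enabled_realize {Q Sg Gm : Type} (A : PT Q Sg Gm k)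
    {α : Fin k → Fin k → Bool} {b : Fin k → Bool} (hbc : BasicConsistent α b)
    {t : PTrans Q Sg k} (ht : t ∈ A.δ) (hts : testSatAbs α b t.test)
    (hop : opEnabledAbs α b t.op) (u' : List Sg) (h' : ℕ) (hh : h' ≤ u'.length)
    (hlet : letterAt u' h' = t.letter) :
    A.Enabled u' t ⟨t.src, pebOf α b h', h'⟩ := by
  refine ⟨⟨t.tgt, opApply (pebOf α b h') h' t.op, nextHead u'.length h' (A.dir t.tgt)⟩,
    ht, rfl, hh, ?_, hlet, ?_, opEnabled_realize hbc h' hop, rfl, rfl, rfl⟩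
  · rw [pebOf_length]; exact mOf_le α
  · intro l hl
    rw [atomSat_realize hbc]
    exact hts l hl

end Realization

end RevPeb

namespace RevPeb

/-- If `A` is deterministic then the basic `k`-pebble transducer obtained
from `A` by the consistency-pair construction is deterministic. -/
theorem consistencyPair_deterministic
    {Q Sg Gm : Type} {k : ℕ} (A : PT Q Sg Gm k)
    (hA : A.Deterministic) :
    (consistencyPair A).Deterministic := by
  intro u t₁' t₂' C h1 h2
  obtain ⟨C₁', hm1, hq1, hh1, hpl1, hlet1, htest1, hop1, -, -, -⟩ := h1
  obtain ⟨C₂', hm2, hq2, hh2, hpl2, hlet2, htest2, hop2, -, -, -⟩ := h2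
  obtain ⟨t₁, ht₁, α₁, b₁, hok1, rfl⟩ := hm1
  obtain ⟨t₂, ht₂, α₂, b₂, hok2, rfl⟩ := hm2
  simp only [cpTrans] at hq1 hq2 hlet1 hlet2 htest1 htest2 hop1
  have hpair : (t₁.src, α₁) = (t₂.src, α₂) := by rw [← hq1, ← hq2]
  have hsrc : t₁.src = t₂.src := congrArg Prod.fst hpair
  have hα : α₁ = α₂ := congrArg Prod.snd hpair
  subst hα
  have hb : b₁ = b₂ := by
    funext j
    have h1j := htest1 (Atom.headPeb j, b₁ j)
      (List.mem_map.mpr ⟨j, List.mem_finRange j, rfl⟩)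
    have h2j := htest2 (Atom.headPeb j, b₂ j)
      (List.mem_map.mpr ⟨j, List.mem_finRange j, rfl⟩)
    simp only [atomSat] at h1j h2j
    have hiff : b₁ j = true ↔ b₂ j = true := h1j.symm.trans h2j
    cases hb1 : b₁ j <;> cases hb2 : b₂ j <;> simp [hb1, hb2] at hiff ⊢
  subst hb
  have hlet : t₂.letter = t₁.letter := by rw [← hlet1, ← hlet2]
  obtain ⟨hbc, hts1, hoe1⟩ := hok1
  obtain ⟨-, hts2, hoe2⟩ := hok2
  suffices ht12 : t₁ = t₂ by rw [ht12]
  cases hl : t₁.letter with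
  | none =>
    have h1e := enabled_realize A hbc ht₁ hts1 hoe1 ([] : List Sg) 0 (by simp)
      (by simp [letterAt, hl])
    have h2e := enabled_realize A hbc ht₂ hts2 hoe2 ([] : List Sg) 0 (by simp)
      (by simp [letterAt, hlet, hl])
    rw [← hsrc] at h2e
    exact hA _ t₁ t₂ _ h1e h2e
  | some a =>
    have h1e := enabled_realize A hbc ht₁ hts1 hoe1 ([a] : List Sg) 1 (by simp)
      (by simp [letterAt, hl])
    have h2e := enabled_realize A hbc ht₂ hts2 hoe2 ([a] : List Sg) 1 (by simp)
      (by simp [letterAt, hlet, hl])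
    rw [← hsrc] at h2e
    exact hA _ t₁ t₂ _ h1e h2e

end RevPeb
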